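/- arXiv:1111.2132 — 2 statements merged into one kernel-verified Lean document; each statement's English description precedes it below -/
import Mathlib

section
/- Let a > b > 0 and let φ₀, φ₁, φ₂, φ₃ : ℝ → ℝ be Schwartz functions (or just C⁴ with suitable integrability). Define u(x,t) = (1/(2ab(a²−b²))) [ −b³ ∫_{x−at}^{x+at} φ₁(y) dy + a³ ∫_{x−bt}^{x+bt} φ₁(y) dy − ab ∫_{x−at}^{x−bt} ∫₀^{y} φ₂(u') du' dy + ab ∫_{x+bt}^{x+at} ∫₀^{y} φ₂(u') du' dy + b ∫_{x−at}^{x+at} ∫₀^{y} ∫₀^{τ} φ₃(ω) dω dτ dy − a ∫_{x−bt}^{x+bt} ∫₀^{y} ∫₀^{τ} φ₃(ω) dω dτ dy − ab³ φ₀(x+at) − ab³ φ₀(x−at) + a³b φ₀(x+bt) + a³b φ₀(x−bt) ]. Then u satisfies the one-dimensional biwave equation (∂²/∂t² − a²∂²/∂x²)(∂²/∂t² − b²∂²/∂x²)u = 0 on ℝ × (0,∞). -/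
/-- Second time derivative of `u : ℝ × ℝ → ℝ` (curried, first space then time). -/
noncomputable def dtt (u : ℝ → ℝ → ℝ) (x t : ℝ) : ℝ := iteratedDeriv 2 (fun s => u x s) t

/-- Second space derivative. -/
noncomputable def dxx (u : ℝ → ℝ → ℝ) (x t : ℝ) : ℝ := iteratedDeriv 2 (fun s => u s t) x

/-- Derivative of a traveling wave in the time variable. -/
lemma hasDerivAt_wave_t (f : ℝ → ℝ) (hf : Differentiable ℝ f) (c x t : ℝ) :
    HasDerivAt (fun s => f (x + c * s)) (c * deriv f (x + c * t)) t := by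
  have h := ((hf (x + c * t)).hasDerivAt).comp t
    (((hasDerivAt_id t).const_mul c).const_add x)
  simpa [mul_comm, Function.comp_def] using h

/-- Derivative of a traveling wave in the space variable. -/
lemma hasDerivAt_wave_x (f : ℝ → ℝ) (hf : Differentiable ℝ f) (c t x : ℝ) :
    HasDerivAt (fun y => f (y + c * t)) (deriv f (x + c * t)) x := by
  have h := ((hf (x + c * t)).hasDerivAt).comp x ((hasDerivAt_id x).add_const (c * t))
  simpa [Function.comp_def] using h

lemma contDiff_deriv_deriv {f : ℝ → ℝ} (hf : ContDiff ℝ 4 f) :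
    ContDiff ℝ 2 (deriv (deriv f)) := by
  have h : ContDiff ℝ ((2 + 2 : ℕ) : WithTop ℕ∞) f := by exact_mod_cast hf
  have := ContDiff.iterate_deriv' 2 2 h
  simpa [Function.iterate_succ] using this

lemma contDiff_primitive {n : ℕ} (f : ℝ → ℝ) (hf : ContDiff ℝ n f) :
    ContDiff ℝ (n + 1 : ℕ) (fun y => ∫ t in (0:ℝ)..y, f t) := by
  have hd : ∀ y : ℝ, HasDerivAt (fun y => ∫ t in (0:ℝ)..y, f t) (f y) y := fun y =>
    (hf.continuous.integral_hasStrictDerivAt 0 y).hasDerivAt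
  have hder : deriv (fun y => ∫ t in (0:ℝ)..y, f t) = f := funext fun y => (hd y).deriv
  have : ((n + 1 : ℕ) : WithTop ℕ∞) = (n : WithTop ℕ∞) + 1 := by push_cast; ring
  rw [this, contDiff_succ_iff_deriv]
  refine ⟨fun y => (hd y).differentiableAt, fun h => by simp at h, by rwa [hder]⟩

/-- Second derivatives of a sum of four traveling waves. -/
lemma wave4 (F G H K : ℝ → ℝ)
    (hF : ContDiff ℝ 2 F) (hG : ContDiff ℝ 2 G) (hH : ContDiff ℝ 2 H) (hK : ContDiff ℝ 2 K)
    (p q : ℝ) (u : ℝ → ℝ → ℝ)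
    (hu : ∀ x t, u x t = F (x + p * t) + G (x + (-p) * t) + H (x + q * t) + K (x + (-q) * t))
    (x t : ℝ) :
    dtt u x t = p ^ 2 * deriv (deriv F) (x + p * t) + p ^ 2 * deriv (deriv G) (x + (-p) * t)
      + q ^ 2 * deriv (deriv H) (x + q * t) + q ^ 2 * deriv (deriv K) (x + (-q) * t)
    ∧ dxx u x t = deriv (deriv F) (x + p * t) + deriv (deriv G) (x + (-p) * t)
      + deriv (deriv H) (x + q * t) + deriv (deriv K) (x + (-q) * t) := by
  have two_eq : (2 : WithTop ℕ∞) = 1 + 1 := by norm_num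
  have hF1 : Differentiable ℝ F := hF.differentiable (by norm_num)
  have hG1 : Differentiable ℝ G := hG.differentiable (by norm_num)
  have hH1 : Differentiable ℝ H := hH.differentiable (by norm_num)
  have hK1 : Differentiable ℝ K := hK.differentiable (by norm_num)
  have hF2 : Differentiable ℝ (deriv F) :=
    ((contDiff_succ_iff_deriv.mp (two_eq ▸ hF)).2.2).differentiable one_ne_zero
  have hG2 : Differentiable ℝ (deriv G) :=
    ((contDiff_succ_iff_deriv.mp (two_eq ▸ hG)).2.2).differentiable one_ne_zero
  have hH2 : Differentiable ℝ (deriv H) :=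
    ((contDiff_succ_iff_deriv.mp (two_eq ▸ hH)).2.2).differentiable one_ne_zero
  have hK2 : Differentiable ℝ (deriv K) :=
    ((contDiff_succ_iff_deriv.mp (two_eq ▸ hK)).2.2).differentiable one_ne_zero
  have it2 : ∀ g : ℝ → ℝ, ∀ y : ℝ, iteratedDeriv 2 g y = deriv (deriv g) y := by
    intro g y
    rw [show (2 : ℕ) = 1 + 1 from rfl, iteratedDeriv_succ, iteratedDeriv_one]
  constructor
  · have e1 : (fun s => u x s)
        = fun s => F (x + p * s) + G (x + (-p) * s) + H (x + q * s) + K (x + (-q) * s) :=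
      funext fun s => hu x s
    have d1 : deriv (fun s => u x s) = fun s =>
        p * deriv F (x + p * s) + (-p) * deriv G (x + (-p) * s)
        + q * deriv H (x + q * s) + (-q) * deriv K (x + (-q) * s) := by
      funext s
      rw [e1]
      exact ((((hasDerivAt_wave_t F hF1 p x s).add (hasDerivAt_wave_t G hG1 (-p) x s)).add
        (hasDerivAt_wave_t H hH1 q x s)).add (hasDerivAt_wave_t K hK1 (-q) x s)).deriv
    have d2 : HasDerivAt (fun s =>
        p * deriv F (x + p * s) + (-p) * deriv G (x + (-p) * s)
        + q * deriv H (x + q * s) + (-q) * deriv K (x + (-q) * s))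
        (p * (p * deriv (deriv F) (x + p * t)) + (-p) * ((-p) * deriv (deriv G) (x + (-p) * t))
        + q * (q * deriv (deriv H) (x + q * t)) + (-q) * ((-q) * deriv (deriv K) (x + (-q) * t)))
        t :=
      ((((hasDerivAt_wave_t (deriv F) hF2 p x t).const_mul p).add
        ((hasDerivAt_wave_t (deriv G) hG2 (-p) x t).const_mul (-p))).add
        ((hasDerivAt_wave_t (deriv H) hH2 q x t).const_mul q)).add
        ((hasDerivAt_wave_t (deriv K) hK2 (-q) x t).const_mul (-q))
    rw [dtt, it2, d1, d2.deriv]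
    ring
  · have e1 : (fun s => u s t)
        = fun s => F (s + p * t) + G (s + (-p) * t) + H (s + q * t) + K (s + (-q) * t) :=
      funext fun s => hu s t
    have d1 : deriv (fun s => u s t) = fun s =>
        deriv F (s + p * t) + deriv G (s + (-p) * t)
        + deriv H (s + q * t) + deriv K (s + (-q) * t) := by
      funext s
      rw [e1]
      exact ((((hasDerivAt_wave_x F hF1 p t s).add (hasDerivAt_wave_x G hG1 (-p) t s)).add
        (hasDerivAt_wave_x H hH1 q t s)).add (hasDerivAt_wave_x K hK1 (-q) t s)).deriv
    have d2 : HasDerivAt (fun s =>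
        deriv F (s + p * t) + deriv G (s + (-p) * t)
        + deriv H (s + q * t) + deriv K (s + (-q) * t))
        (deriv (deriv F) (x + p * t) + deriv (deriv G) (x + (-p) * t)
        + deriv (deriv H) (x + q * t) + deriv (deriv K) (x + (-q) * t)) x :=
      (((hasDerivAt_wave_x (deriv F) hF2 p t x).add
        (hasDerivAt_wave_x (deriv G) hG2 (-p) t x)).add
        (hasDerivAt_wave_x (deriv H) hH2 q t x)).add
        (hasDerivAt_wave_x (deriv K) hK2 (-q) t x)
    rw [dxx, it2, d1, d2.deriv]

/-- The explicit d'Alembert-type formula solves the one-dimensional biwave equation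
`(∂²/∂t² − a²∂²/∂x²)(∂²/∂t² − b²∂²/∂x²)u = 0` on `ℝ × (0,∞)`. -/
theorem biwave_1d_formula_solves (a b : ℝ) (hab : b < a) (hb : 0 < b)
    (φ₀ φ₁ φ₂ φ₃ : ℝ → ℝ)
    (h0 : ContDiff ℝ 4 φ₀) (h1 : ContDiff ℝ 3 φ₁) (h2 : ContDiff ℝ 2 φ₂)
    (h3 : ContDiff ℝ 1 φ₃)
    (u : ℝ → ℝ → ℝ)
    (hu : ∀ x t, u x t = (1 / (2 * a * b * (a ^ 2 - b ^ 2))) *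
      (-(b ^ 3) * (∫ y in (x - a * t)..(x + a * t), φ₁ y)
        + a ^ 3 * (∫ y in (x - b * t)..(x + b * t), φ₁ y)
        - a * b * (∫ y in (x - a * t)..(x - b * t), ∫ u' in (0:ℝ)..y, φ₂ u')
        + a * b * (∫ y in (x + b * t)..(x + a * t), ∫ u' in (0:ℝ)..y, φ₂ u')
        + b * (∫ y in (x - a * t)..(x + a * t), ∫ τ in (0:ℝ)..y, ∫ ω in (0:ℝ)..τ, φ₃ ω)
        - a * (∫ y in (x - b * t)..(x + b * t), ∫ τ in (0:ℝ)..y, ∫ ω in (0:ℝ)..τ, φ₃ ω)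
        - a * b ^ 3 * φ₀ (x + a * t) - a * b ^ 3 * φ₀ (x - a * t)
        + a ^ 3 * b * φ₀ (x + b * t) + a ^ 3 * b * φ₀ (x - b * t))) :
    ∀ x t, 0 < t →
      dtt (fun x t => dtt u x t - b ^ 2 * dxx u x t) x t
        - a ^ 2 * dxx (fun x t => dtt u x t - b ^ 2 * dxx u x t) x t = 0 := by
  -- antiderivatives
  set Φ₁ : ℝ → ℝ := fun y => ∫ s in (0:ℝ)..y, φ₁ s with hΦ₁def
  set Ψ₂ : ℝ → ℝ := fun y => ∫ s in (0:ℝ)..y, φ₂ s with hΨ₂def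
  set Φ₂ : ℝ → ℝ := fun y => ∫ s in (0:ℝ)..y, Ψ₂ s with hΦ₂def
  set Ψ₃ : ℝ → ℝ := fun y => ∫ s in (0:ℝ)..y, φ₃ s with hΨ₃def
  set Ψ₃' : ℝ → ℝ := fun y => ∫ s in (0:ℝ)..y, Ψ₃ s with hΨ₃'def
  set Φ₃ : ℝ → ℝ := fun y => ∫ s in (0:ℝ)..y, Ψ₃' s with hΦ₃def
  have hΦ₁ : ContDiff ℝ (4:ℕ) Φ₁ := contDiff_primitive φ₁ (by exact_mod_cast h1)
  have hΨ₂ : ContDiff ℝ (3:ℕ) Ψ₂ := contDiff_primitive φ₂ (by exact_mod_cast h2)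
  have hΦ₂ : ContDiff ℝ (4:ℕ) Φ₂ := contDiff_primitive Ψ₂ hΨ₂
  have hΨ₃ : ContDiff ℝ (2:ℕ) Ψ₃ := contDiff_primitive φ₃ (by exact_mod_cast h3)
  have hΨ₃' : ContDiff ℝ (3:ℕ) Ψ₃' := contDiff_primitive Ψ₃ hΨ₃
  have hΦ₃ : ContDiff ℝ (4:ℕ) Φ₃ := contDiff_primitive Ψ₃' hΨ₃'
  set k : ℝ := 1 / (2 * a * b * (a ^ 2 - b ^ 2)) with hk
  set F : ℝ → ℝ := fun y => k * ((-(b^3)) * Φ₁ y + (a*b) * Φ₂ y + b * Φ₃ y - (a*b^3) * φ₀ y)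
    with hFdef
  set G : ℝ → ℝ := fun y => k * ((b^3) * Φ₁ y + (a*b) * Φ₂ y + (-b) * Φ₃ y - (a*b^3) * φ₀ y)
    with hGdef
  set H : ℝ → ℝ := fun y => k * ((a^3) * Φ₁ y + (-(a*b)) * Φ₂ y + (-a) * Φ₃ y - (-(a^3*b)) * φ₀ y)
    with hHdef
  set K : ℝ → ℝ := fun y => k * ((-(a^3)) * Φ₁ y + (-(a*b)) * Φ₂ y + a * Φ₃ y - (-(a^3*b)) * φ₀ y)
    with hKdef
  have h0' : ContDiff ℝ (4:ℕ) φ₀ := by exact_mod_cast h0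
  have hF : ContDiff ℝ (4:ℕ) F :=
    contDiff_const.mul ((((contDiff_const.mul hΦ₁).add (contDiff_const.mul hΦ₂)).add
      (contDiff_const.mul hΦ₃)).sub (contDiff_const.mul h0'))
  have hG : ContDiff ℝ (4:ℕ) G :=
    contDiff_const.mul ((((contDiff_const.mul hΦ₁).add (contDiff_const.mul hΦ₂)).add
      (contDiff_const.mul hΦ₃)).sub (contDiff_const.mul h0'))
  have hH : ContDiff ℝ (4:ℕ) H :=
    contDiff_const.mul ((((contDiff_const.mul hΦ₁).add (contDiff_const.mul hΦ₂)).add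
      (contDiff_const.mul hΦ₃)).sub (contDiff_const.mul h0'))
  have hK : ContDiff ℝ (4:ℕ) K :=
    contDiff_const.mul ((((contDiff_const.mul hΦ₁).add (contDiff_const.mul hΦ₂)).add
      (contDiff_const.mul hΦ₃)).sub (contDiff_const.mul h0'))
  -- integrability of the continuous integrands
  have hi1 : ∀ r s : ℝ, IntervalIntegrable φ₁ MeasureTheory.volume r s :=
    fun r s => h1.continuous.intervalIntegrable r s
  have hi2 : ∀ r s : ℝ, IntervalIntegrable Ψ₂ MeasureTheory.volume r s :=
    fun r s => hΨ₂.continuous.intervalIntegrable r s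
  have hi3 : ∀ r s : ℝ, IntervalIntegrable Ψ₃' MeasureTheory.volume r s :=
    fun r s => hΨ₃'.continuous.intervalIntegrable r s
  -- u as a sum of four traveling waves
  have hu' : ∀ x t : ℝ, u x t
      = F (x + a * t) + G (x + (-a) * t) + H (x + b * t) + K (x + (-b) * t) := by
    intro x t
    have e1 : ∫ y in (x - a*t)..(x + a*t), φ₁ y = Φ₁ (x + a*t) - Φ₁ (x - a*t) :=
      (intervalIntegral.integral_interval_sub_left (hi1 0 _) (hi1 0 _)).symm
    have e2 : ∫ y in (x - b*t)..(x + b*t), φ₁ y = Φ₁ (x + b*t) - Φ₁ (x - b*t) :=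
      (intervalIntegral.integral_interval_sub_left (hi1 0 _) (hi1 0 _)).symm
    have e3 : ∫ y in (x - a*t)..(x - b*t), Ψ₂ y = Φ₂ (x - b*t) - Φ₂ (x - a*t) :=
      (intervalIntegral.integral_interval_sub_left (hi2 0 _) (hi2 0 _)).symm
    have e4 : ∫ y in (x + b*t)..(x + a*t), Ψ₂ y = Φ₂ (x + a*t) - Φ₂ (x + b*t) :=
      (intervalIntegral.integral_interval_sub_left (hi2 0 _) (hi2 0 _)).symm
    have e5 : ∫ y in (x - a*t)..(x + a*t), Ψ₃' y = Φ₃ (x + a*t) - Φ₃ (x - a*t) :=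
      (intervalIntegral.integral_interval_sub_left (hi3 0 _) (hi3 0 _)).symm
    have e6 : ∫ y in (x - b*t)..(x + b*t), Ψ₃' y = Φ₃ (x + b*t) - Φ₃ (x - b*t) :=
      (intervalIntegral.integral_interval_sub_left (hi3 0 _) (hi3 0 _)).symm
    rw [hu x t]
    simp only [hFdef, hGdef, hHdef, hKdef,
      show x + (-a) * t = x - a * t from by ring,
      show x + (-b) * t = x - b * t from by ring, e1, e2, e3, e4, e5, e6]
    ring
  -- first application of the wave operator
  have hF2 : ContDiff ℝ 2 F := hF.of_le (by norm_num)
  have hG2 : ContDiff ℝ 2 G := hG.of_le (by norm_num)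
  have hH2 : ContDiff ℝ 2 H := hH.of_le (by norm_num)
  have hK2 : ContDiff ℝ 2 K := hK.of_le (by norm_num)
  have w4 := wave4 F G H K hF2 hG2 hH2 hK2 a b u hu'
  set F₂ : ℝ → ℝ := fun y => (a^2 - b^2) * deriv (deriv F) y with hF₂def
  set G₂ : ℝ → ℝ := fun y => (a^2 - b^2) * deriv (deriv G) y with hG₂def
  have hw : ∀ x t : ℝ, dtt u x t - b^2 * dxx u x t
      = F₂ (x + a * t) + G₂ (x + (-a) * t) + (fun _ => (0:ℝ)) (x + b * t)
        + (fun _ => (0:ℝ)) (x + (-b) * t) := by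
    intro x t
    obtain ⟨ht, hx⟩ := w4 x t
    rw [ht, hx, hF₂def, hG₂def]
    ring
  have hF₂ : ContDiff ℝ 2 F₂ := contDiff_const.mul (contDiff_deriv_deriv (by exact_mod_cast hF))
  have hG₂ : ContDiff ℝ 2 G₂ := contDiff_const.mul (contDiff_deriv_deriv (by exact_mod_cast hG))
  have w4' := wave4 F₂ G₂ (fun _ => 0) (fun _ => 0) hF₂ hG₂ contDiff_const contDiff_const
    a b (fun x t => dtt u x t - b ^ 2 * dxx u x t) hw
  intro x t _
  obtain ⟨ht, hx⟩ := w4' x t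
  rw [ht, hx]
  simp only [deriv_const']
  ring
end

section
/- With u defined as in the explicit one-dimensional biwave solution formula (Theorem on ℝ × [0,∞) with data φ₀, φ₁, φ₂, φ₃), the initial conditions hold: u(x,0) = φ₀(x), ∂u/∂t(x,0) = φ₁(x), ∂²u/∂t²(x,0) = φ₂(x), and ∂³u/∂t³(x,0) = φ₃(x) for all x ∈ ℝ. -/
noncomputable def prim (f : ℝ → ℝ) : ℝ → ℝ := fun y => ∫ t in (0:ℝ)..y, f t

lemma prim_hasDerivAt (f : ℝ → ℝ) (hf : Continuous f) (y : ℝ) :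
    HasDerivAt (prim f) (f y) y :=
  intervalIntegral.integral_hasDerivAt_right (hf.intervalIntegrable _ _)
    (hf.stronglyMeasurableAtFilter _ _) hf.continuousAt

lemma prim_continuous (f : ℝ → ℝ) (hf : Continuous f) : Continuous (prim f) :=
  Differentiable.continuous (fun y => (prim_hasDerivAt f hf y).differentiableAt)

lemma primitive_split (f : ℝ → ℝ) (hf : Continuous f) (p q : ℝ) :
    (∫ y in p..q, f y) = (∫ y in (0:ℝ)..q, f y) - ∫ y in (0:ℝ)..p, f y :=
  (intervalIntegral.integral_interval_sub_left (hf.intervalIntegrable _ _)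
    (hf.intervalIntegrable _ _)).symm

lemma primitive_split2 (f : ℝ → ℝ) (hf : Continuous f) (p q : ℝ) :
    (∫ y in p..q, ∫ t in (0:ℝ)..y, f t)
      = (∫ y in (0:ℝ)..q, ∫ t in (0:ℝ)..y, f t) - ∫ y in (0:ℝ)..p, ∫ t in (0:ℝ)..y, f t :=
  primitive_split (prim f) (prim_continuous f hf) p q

lemma primitive_split3 (f : ℝ → ℝ) (hf : Continuous f) (p q : ℝ) :
    (∫ y in p..q, ∫ τ in (0:ℝ)..y, ∫ ω in (0:ℝ)..τ, f ω)
      = (∫ y in (0:ℝ)..q, ∫ τ in (0:ℝ)..y, ∫ ω in (0:ℝ)..τ, f ω)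
        - ∫ y in (0:ℝ)..p, ∫ τ in (0:ℝ)..y, ∫ ω in (0:ℝ)..τ, f ω :=
  primitive_split (prim (prim f)) (prim_continuous _ (prim_continuous f hf)) p q

noncomputable def biE (c x : ℝ) {n : ℕ} (k s : Fin n → ℝ) (f : Fin n → ℝ → ℝ) (t : ℝ) : ℝ :=
  c * ∑ i, k i * f i (x + s i * t)

lemma biE_hasDerivAt {n : ℕ} (c x : ℝ) (k s : Fin n → ℝ) (f f' : Fin n → ℝ → ℝ)
    (hf : ∀ i y, HasDerivAt (f i) (f' i y) y) (t : ℝ) :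
    HasDerivAt (biE c x k s f) (biE c x (fun i => k i * s i) s f' t) t := by
  have h : ∀ i ∈ Finset.univ, HasDerivAt (fun t : ℝ => k i * f i (x + s i * t))
      ((fun i : Fin n => k i * s i * f' i (x + s i * t)) i) t := by
    intro i _
    have haff : HasDerivAt (fun t : ℝ => x + s i * t) (s i) t := by
      simpa using ((hasDerivAt_id t).const_mul (s i)).const_add x
    have h2 := ((hf i (x + s i * t)).comp t haff).const_mul (k i)
    rw [show (fun i : Fin n => k i * s i * f' i (x + s i * t)) i
        = k i * (f' i (x + s i * t) * s i) by ring]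
    exact h2
  have h3 := (HasDerivAt.fun_sum h).const_mul c
  have he : biE c x (fun i => k i * s i) s f' t
      = c * ∑ i, k i * s i * f' i (x + s i * t) := by
    simp [biE, mul_assoc]
  rw [he]
  exact h3

/-- The explicit one-dimensional biwave solution formula satisfies the initial
conditions `u(x,0)=φ₀, ∂ₜu(x,0)=φ₁, ∂ₜ²u(x,0)=φ₂, ∂ₜ³u(x,0)=φ₃`. -/
theorem biwave_1d_formula_initial_conditions (a b : ℝ) (hab : b < a) (hb : 0 < b)
    (φ₀ φ₁ φ₂ φ₃ : ℝ → ℝ)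
    (h0 : ContDiff ℝ 4 φ₀) (h1 : ContDiff ℝ 3 φ₁) (h2 : ContDiff ℝ 2 φ₂)
    (h3 : ContDiff ℝ 1 φ₃)
    (u : ℝ → ℝ → ℝ)
    (hu : ∀ x t, u x t = (1 / (2 * a * b * (a ^ 2 - b ^ 2))) *
      (-(b ^ 3) * (∫ y in (x - a * t)..(x + a * t), φ₁ y)
        + a ^ 3 * (∫ y in (x - b * t)..(x + b * t), φ₁ y)
        - a * b * (∫ y in (x - a * t)..(x - b * t), ∫ u' in (0:ℝ)..y, φ₂ u')
        + a * b * (∫ y in (x + b * t)..(x + a * t), ∫ u' in (0:ℝ)..y, φ₂ u')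
        + b * (∫ y in (x - a * t)..(x + a * t), ∫ τ in (0:ℝ)..y, ∫ ω in (0:ℝ)..τ, φ₃ ω)
        - a * (∫ y in (x - b * t)..(x + b * t), ∫ τ in (0:ℝ)..y, ∫ ω in (0:ℝ)..τ, φ₃ ω)
        - a * b ^ 3 * φ₀ (x + a * t) - a * b ^ 3 * φ₀ (x - a * t)
        + a ^ 3 * b * φ₀ (x + b * t) + a ^ 3 * b * φ₀ (x - b * t))) :
    ∀ x : ℝ,
      u x 0 = φ₀ x ∧
      deriv (fun t => u x t) 0 = φ₁ x ∧
      iteratedDeriv 2 (fun t => u x t) 0 = φ₂ x ∧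
      iteratedDeriv 3 (fun t => u x t) 0 = φ₃ x := by
  have ha0 : (0:ℝ) < a := hb.trans hab
  have ha : a ≠ 0 := ha0.ne'
  have hb' : b ≠ 0 := hb.ne'
  have hab2 : (0:ℝ) < a ^ 2 - b ^ 2 := by nlinarith
  have hD : 2 * a * b * (a ^ 2 - b ^ 2) ≠ 0 :=
    (mul_pos (mul_pos (mul_pos (by norm_num : (0:ℝ) < 2) ha0) hb) hab2).ne'
  -- continuity facts
  have hc0 : Continuous φ₀ := h0.continuous
  have hc1 : Continuous φ₁ := h1.continuous
  have hc2 : Continuous φ₂ := h2.continuous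
  have hc3 : Continuous φ₃ := h3.continuous
  -- higher smoothness of φ₀, φ₁
  have h0' : ContDiff ℝ 3 (deriv φ₀) := by
    have h : ContDiff ℝ ((3:ℕ)+1) φ₀ := by exact_mod_cast h0
    exact_mod_cast (contDiff_succ_iff_deriv.mp h).2.2
  have h0'' : ContDiff ℝ 2 (deriv (deriv φ₀)) := by
    have h : ContDiff ℝ ((2:ℕ)+1) (deriv φ₀) := by exact_mod_cast h0'
    exact_mod_cast (contDiff_succ_iff_deriv.mp h).2.2
  have h1' : ContDiff ℝ 2 (deriv φ₁) := by
    have h : ContDiff ℝ ((2:ℕ)+1) φ₁ := by exact_mod_cast h1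
    exact_mod_cast (contDiff_succ_iff_deriv.mp h).2.2
  intro x
  set c : ℝ := 1 / (2 * a * b * (a ^ 2 - b ^ 2)) with hc
  -- the data vectors
  set k₀ : Fin 16 → ℝ :=
    ![-b^3, b^3, a^3, -(a^3), -(a*b), a*b, a*b, -(a*b), b, -b, -a, a,
      -(a*b^3), -(a*b^3), a^3*b, a^3*b] with hk₀
  set sv : Fin 16 → ℝ :=
    ![a, -a, b, -b, -b, -a, a, b, a, -a, b, -b, a, -a, b, -b] with hsv
  set f₀ : Fin 16 → ℝ → ℝ :=
    ![prim φ₁, prim φ₁, prim φ₁, prim φ₁,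
      prim (prim φ₂), prim (prim φ₂), prim (prim φ₂), prim (prim φ₂),
      prim (prim (prim φ₃)), prim (prim (prim φ₃)), prim (prim (prim φ₃)),
      prim (prim (prim φ₃)), φ₀, φ₀, φ₀, φ₀] with hf₀
  set f₁ : Fin 16 → ℝ → ℝ :=
    ![φ₁, φ₁, φ₁, φ₁, prim φ₂, prim φ₂, prim φ₂, prim φ₂,
      prim (prim φ₃), prim (prim φ₃), prim (prim φ₃), prim (prim φ₃),
      deriv φ₀, deriv φ₀, deriv φ₀, deriv φ₀] with hf₁
  set f₂ : Fin 16 → ℝ → ℝ :=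
    ![deriv φ₁, deriv φ₁, deriv φ₁, deriv φ₁, φ₂, φ₂, φ₂, φ₂,
      prim φ₃, prim φ₃, prim φ₃, prim φ₃,
      deriv (deriv φ₀), deriv (deriv φ₀), deriv (deriv φ₀), deriv (deriv φ₀)] with hf₂
  set f₃ : Fin 16 → ℝ → ℝ :=
    ![deriv (deriv φ₁), deriv (deriv φ₁), deriv (deriv φ₁), deriv (deriv φ₁),
      deriv φ₂, deriv φ₂, deriv φ₂, deriv φ₂, φ₃, φ₃, φ₃, φ₃,
      deriv (deriv (deriv φ₀)), deriv (deriv (deriv φ₀)), deriv (deriv (deriv φ₀)),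
      deriv (deriv (deriv φ₀))] with hf₃
  -- transition derivatives
  have ht0 : ∀ i y, HasDerivAt (f₀ i) (f₁ i y) y := by
    intro i y
    fin_cases i <;> simp only [hf₀, hf₁, Matrix.cons_val_zero, Matrix.cons_val_one,
      Matrix.head_cons, Matrix.cons_val_succ] <;>
    first
      | exact prim_hasDerivAt _ hc1 y
      | exact prim_hasDerivAt _ (prim_continuous _ hc2) y
      | exact prim_hasDerivAt _ (prim_continuous _ (prim_continuous _ hc3)) y
      | exact ((h0.differentiable (by norm_num)) y).hasDerivAt
  have ht1 : ∀ i y, HasDerivAt (f₁ i) (f₂ i y) y := by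
    intro i y
    fin_cases i <;> simp only [hf₁, hf₂, Matrix.cons_val_zero, Matrix.cons_val_one,
      Matrix.head_cons, Matrix.cons_val_succ] <;>
    first
      | exact ((h1.differentiable (by norm_num)) y).hasDerivAt
      | exact prim_hasDerivAt _ hc2 y
      | exact prim_hasDerivAt _ (prim_continuous _ hc3) y
      | exact ((h0'.differentiable (by norm_num)) y).hasDerivAt
  have ht2 : ∀ i y, HasDerivAt (f₂ i) (f₃ i y) y := by
    intro i y
    fin_cases i <;> simp only [hf₂, hf₃, Matrix.cons_val_zero, Matrix.cons_val_one,
      Matrix.head_cons, Matrix.cons_val_succ] <;>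
    first
      | exact ((h1'.differentiable (by norm_num)) y).hasDerivAt
      | exact ((h2.differentiable (by norm_num)) y).hasDerivAt
      | exact prim_hasDerivAt _ hc3 y
      | exact ((h0''.differentiable (by norm_num)) y).hasDerivAt
  -- rewrite u x as biE
  have hux : (fun t => u x t) = biE c x k₀ sv f₀ := by
    funext t
    rw [hu]
    rw [primitive_split φ₁ hc1 (x - a * t) (x + a * t),
        primitive_split φ₁ hc1 (x - b * t) (x + b * t),
        primitive_split2 φ₂ hc2 (x - a * t) (x - b * t),
        primitive_split2 φ₂ hc2 (x + b * t) (x + a * t),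
        primitive_split3 φ₃ hc3 (x - a * t) (x + a * t),
        primitive_split3 φ₃ hc3 (x - b * t) (x + b * t)]
    simp only [biE, hk₀, hsv, hf₀, Fin.sum_univ_succ, Fin.sum_univ_zero,
      Matrix.cons_val_zero, Matrix.cons_val_one, Matrix.head_cons, Matrix.cons_val_succ,
      prim]
    ring
  -- derivatives
  set k₁ : Fin 16 → ℝ := fun i => k₀ i * sv i with hk₁
  set k₂ : Fin 16 → ℝ := fun i => k₁ i * sv i with hk₂
  set k₃ : Fin 16 → ℝ := fun i => k₂ i * sv i with hk₃
  have hd0 : deriv (biE c x k₀ sv f₀) = biE c x k₁ sv f₁ :=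
    funext fun t => (biE_hasDerivAt c x k₀ sv f₀ f₁ ht0 t).deriv
  have hd1 : deriv (biE c x k₁ sv f₁) = biE c x k₂ sv f₂ :=
    funext fun t => (biE_hasDerivAt c x k₁ sv f₁ f₂ ht1 t).deriv
  have hd2 : deriv (biE c x k₂ sv f₂) = biE c x k₃ sv f₃ :=
    funext fun t => (biE_hasDerivAt c x k₂ sv f₂ f₃ ht2 t).deriv
  refine ⟨?_, ?_, ?_, ?_⟩
  · rw [hu]
    simp only [mul_zero, add_zero, sub_zero, intervalIntegral.integral_same,
      zero_add, neg_zero]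
    rw [hc, one_div, inv_mul_eq_div, div_eq_iff hD]
    ring
  · rw [hux, hd0]
    simp only [biE, hk₁, hk₀, hsv, hf₁, Fin.sum_univ_succ, Fin.sum_univ_zero,
      Matrix.cons_val_zero, Matrix.cons_val_one, Matrix.head_cons, Matrix.cons_val_succ,
      mul_zero, add_zero]
    rw [hc, one_div, inv_mul_eq_div, div_eq_iff hD]
    ring
  · rw [iteratedDeriv_succ, iteratedDeriv_one, hux, hd0, hd1]
    simp only [biE, hk₂, hk₁, hk₀, hsv, hf₂, Fin.sum_univ_succ, Fin.sum_univ_zero,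
      Matrix.cons_val_zero, Matrix.cons_val_one, Matrix.head_cons, Matrix.cons_val_succ,
      mul_zero, add_zero]
    rw [hc, one_div, inv_mul_eq_div, div_eq_iff hD]
    ring
  · rw [iteratedDeriv_succ, iteratedDeriv_succ, iteratedDeriv_one, hux, hd0, hd1, hd2]
    simp only [biE, hk₃, hk₂, hk₁, hk₀, hsv, hf₃, Fin.sum_univ_succ, Fin.sum_univ_zero,
      Matrix.cons_val_zero, Matrix.cons_val_one, Matrix.head_cons, Matrix.cons_val_succ,
      mul_zero, add_zero]
    rw [hc, one_div, inv_mul_eq_div, div_eq_iff hD]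
    ring
end
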